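/- Let p > 0, a = 2/(n+p), b = n/(n+p), r ∈ [0,1). Then (1/2)^{n+p} (2b)^{n-1} a [1 - a + (1 - 2b - a)r²] ≤ 1; consequently the function v(x) = -(1/2) x_n^a (1-r²)^b with r = |x'| satisfies det D²v ≤ |v|^{-p} wherever x_n > 0 and r < 1. -/

import Mathlib

open Real

/-- The Hessian determinant of a function on Euclidean space, computed via
iterated Fréchet derivatives in the standard coordinate directions. -/
noncomputable def hessDet {n : ℕ} (w : EuclideanSpace ℝ (Fin n) → ℝ)
    (x : EuclideanSpace ℝ (Fin n)) : ℝ :=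
  (Matrix.of fun i j : Fin n =>
    fderiv ℝ (fun y => fderiv ℝ w y (EuclideanSpace.single i 1)) x
      (EuclideanSpace.single j 1)).det

namespace Stmt5Aux
variable {n : ℕ}

lemma proj_hasFDerivAt (k : Fin n) (y : EuclideanSpace ℝ (Fin n)) :
    HasFDerivAt (fun z : EuclideanSpace ℝ (Fin n) => z k)
      (EuclideanSpace.proj k : EuclideanSpace ℝ (Fin n) →L[ℝ] ℝ) y :=
  (EuclideanSpace.proj k : EuclideanSpace ℝ (Fin n) →L[ℝ] ℝ).hasFDerivAt

lemma proj_single (j i : Fin n) :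
    (EuclideanSpace.proj j : EuclideanSpace ℝ (Fin n) →L[ℝ] ℝ) (EuclideanSpace.single i 1)
      = if j = i then 1 else 0 := by
  simp [EuclideanSpace.single_apply]

noncomputable def Ssum (k : Fin n) (y : EuclideanSpace ℝ (Fin n)) : ℝ :=
  ∑ j ∈ Finset.univ.erase k, (y j) ^ 2

noncomputable def Lmap (k : Fin n) (y : EuclideanSpace ℝ (Fin n)) :
    EuclideanSpace ℝ (Fin n) →L[ℝ] ℝ :=
  ∑ j ∈ Finset.univ.erase k, (y j) • (EuclideanSpace.proj j : EuclideanSpace ℝ (Fin n) →L[ℝ] ℝ)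

lemma Lmap_single (k : Fin n) (y : EuclideanSpace ℝ (Fin n)) (i : Fin n) :
    Lmap k y (EuclideanSpace.single i 1) = if i = k then 0 else y i := by
  rw [Lmap, ContinuousLinearMap.sum_apply]
  simp only [ContinuousLinearMap.smul_apply, proj_single, smul_eq_mul, mul_ite, mul_one, mul_zero]
  rw [Finset.sum_ite_eq' (Finset.univ.erase k) i (fun j => y j)]
  simp only [Finset.mem_erase, Finset.mem_univ, and_true]
  split_ifs with h1 h2 h2 <;> simp_all

lemma Ssum_nonneg (k : Fin n) (y : EuclideanSpace ℝ (Fin n)) : 0 ≤ Ssum k y :=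
  Finset.sum_nonneg fun j _ => sq_nonneg _

lemma continuous_Ssum (k : Fin n) : Continuous (Ssum (n := n) k) := by
  unfold Ssum
  exact continuous_finset_sum _ fun j _ =>
    ((EuclideanSpace.proj j : EuclideanSpace ℝ (Fin n) →L[ℝ] ℝ).continuous.pow 2)

lemma hasFDerivAt_Ssum (k : Fin n) (y : EuclideanSpace ℝ (Fin n)) :
    HasFDerivAt (Ssum k) ((2 : ℝ) • Lmap k y) y := by
  have h : HasFDerivAt (Ssum k)
      (∑ j ∈ Finset.univ.erase k,
        (2 * y j) • (EuclideanSpace.proj j : EuclideanSpace ℝ (Fin n) →L[ℝ] ℝ)) y := by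
    unfold Ssum
    apply HasFDerivAt.fun_sum
    intro j _
    simpa using (proj_hasFDerivAt j y).pow 2
  convert h using 1
  rw [Lmap, Finset.smul_sum]
  exact Finset.sum_congr rfl fun j _ => by rw [smul_smul]

lemma master (k : Fin n) (C q w : ℝ) (y : EuclideanSpace ℝ (Fin n))
    (h1 : 0 < y k) (h2 : Ssum k y < 1) :
    HasFDerivAt (fun z : EuclideanSpace ℝ (Fin n) => C * (z k) ^ q * (1 - Ssum k z) ^ w)
      ((C * q * (y k) ^ (q - 1) * (1 - Ssum k y) ^ w) •
          (EuclideanSpace.proj k : EuclideanSpace ℝ (Fin n) →L[ℝ] ℝ)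
        + ((-2) * C * w * (y k) ^ q * (1 - Ssum k y) ^ (w - 1)) • Lmap k y) y := by
  have hk : HasFDerivAt (fun z : EuclideanSpace ℝ (Fin n) => C * (z k) ^ q)
      (C • ((q * (y k) ^ (q - 1)) •
        (EuclideanSpace.proj k : EuclideanSpace ℝ (Fin n) →L[ℝ] ℝ))) y :=
    ((proj_hasFDerivAt k y).rpow_const (p := q) (Or.inl h1.ne')).const_mul C
  have hin : HasFDerivAt (fun z : EuclideanSpace ℝ (Fin n) => 1 - Ssum k z)
      ((-2 : ℝ) • Lmap k y) y := by
    have := (hasFDerivAt_Ssum k y).const_sub 1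
    exact this.congr_fderiv (neg_smul (2:ℝ) (Lmap k y)).symm
  have hw : HasFDerivAt (fun z : EuclideanSpace ℝ (Fin n) => (1 - Ssum k z) ^ w)
      ((w * (1 - Ssum k y) ^ (w - 1)) • ((-2 : ℝ) • Lmap k y)) y :=
    hin.rpow_const (p := w) (Or.inl (sub_pos.2 h2).ne')
  have hmul : HasFDerivAt (fun z : EuclideanSpace ℝ (Fin n) => C * (z k) ^ q * (1 - Ssum k z) ^ w) _ y :=
    hk.mul hw
  refine hmul.congr_fderiv ?_
  ext h
  simp only [ContinuousLinearMap.add_apply, ContinuousLinearMap.smul_apply, smul_eq_mul,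
    ContinuousLinearMap.coe_smul', Pi.smul_apply]
  ring

end Stmt5Aux


lemma part1 (n : ℕ) (hn : 2 ≤ n) (p : ℝ) (hp : 0 < p)
    (a b : ℝ) (ha : a = 2 / (n + p)) (hb : b = n / (n + p)) :
    ∀ r : ℝ, 0 ≤ r → r < 1 →
      ((1 : ℝ) / 2) ^ ((n : ℝ) + p) * (2 * b) ^ (n - 1) * a *
        (1 - a + (1 - 2 * b - a) * r ^ 2) ≤ 1 := by
  intro r hr0 hr1
  have hn2 : (2 : ℝ) ≤ (n : ℝ) := by exact_mod_cast hn
  have hQ : (0 : ℝ) < (n : ℝ) + p := by linarith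
  have ha0 : 0 < a := by rw [ha]; positivity
  have hb0 : 0 < b := by rw [hb]; positivity
  have ha1 : a ≤ 1 := by rw [ha, div_le_one hQ]; linarith
  have hb1 : b ≤ 1 := by rw [hb, div_le_one hQ]; linarith
  have hP : ((1 : ℝ) / 2) ^ ((n : ℝ) + p) ≤ ((1 : ℝ) / 2) ^ n := by
    rw [← Real.rpow_natCast ((1:ℝ)/2) n]
    exact Real.rpow_le_rpow_of_exponent_ge (by norm_num) (by norm_num) (by linarith)
  have hP0 : (0 : ℝ) < ((1 : ℝ) / 2) ^ ((n : ℝ) + p) := Real.rpow_pos_of_pos (by norm_num) _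
  have h2b : (2 * b) ^ (n - 1) ≤ 2 ^ (n - 1) :=
    pow_le_pow_left₀ (by positivity) (by linarith) _
  rcases le_or_gt (1 - a + (1 - 2 * b - a) * r ^ 2) 0 with hbr | hbr
  · have h1 : (0:ℝ) ≤ ((1 : ℝ) / 2) ^ ((n : ℝ) + p) * (2 * b) ^ (n - 1) * a := by positivity
    nlinarith
  · have hbr2 : 1 - a + (1 - 2 * b - a) * r ^ 2 ≤ 2 := by
      rcases le_or_gt (1 - 2 * b - a) 0 with h | h
      · nlinarith
      · nlinarith
    calc ((1 : ℝ) / 2) ^ ((n : ℝ) + p) * (2 * b) ^ (n - 1) * a *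
          (1 - a + (1 - 2 * b - a) * r ^ 2)
        ≤ ((1 : ℝ) / 2) ^ n * 2 ^ (n - 1) * 1 * 2 := by
          gcongr
      _ = ((1 : ℝ) / 2) ^ n * 2 ^ n := by
          rw [mul_one, mul_assoc, ← pow_succ]
          congr 2
          omega
      _ = 1 := by rw [← mul_pow]; norm_num



open Stmt5Aux in
theorem stmt5 (n : ℕ) (hn : 2 ≤ n) (p : ℝ) (hp : 0 < p)
    (a b : ℝ) (ha : a = 2 / (n + p)) (hb : b = n / (n + p))
    (xn : EuclideanSpace ℝ (Fin n) → ℝ) (hxn : ∀ x, xn x = x ⟨n - 1, by omega⟩)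
    (s : EuclideanSpace ℝ (Fin n) → ℝ) (hs : ∀ x, s x = ‖x‖ ^ 2 - (xn x) ^ 2)
    (v : EuclideanSpace ℝ (Fin n) → ℝ)
    (hv : ∀ x, v x = -(1 / 2) * (xn x) ^ a * (1 - s x) ^ b) :
    (∀ r : ℝ, 0 ≤ r → r < 1 →
      ((1 : ℝ) / 2) ^ ((n : ℝ) + p) * (2 * b) ^ (n - 1) * a *
        (1 - a + (1 - 2 * b - a) * r ^ 2) ≤ 1) ∧
    ∀ x, 0 < xn x → s x < 1 → hessDet v x ≤ |v x| ^ (-p) := by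
  constructor
  · exact part1 n hn p hp a b ha hb
  · intro x hx1 hx2
    unfold hessDet
    have hkn : n - 1 < n := by omega
    set k : Fin n := ⟨n - 1, hkn⟩ with hkdef
    have hxk : ∀ y : EuclideanSpace ℝ (Fin n), xn y = y k := fun y => hxn y
    -- norms
    have hnorm : ∀ y : EuclideanSpace ℝ (Fin n), ‖y‖ ^ 2 = ∑ j, (y j) ^ 2 := by
      intro y
      rw [EuclideanSpace.norm_eq, Real.sq_sqrt (by positivity)]
      simp [sq_abs]
    have hSs : ∀ y, s y = Ssum k y := by
      intro y
      rw [hs, hxk, hnorm, Ssum, Finset.sum_erase_eq_sub (Finset.mem_univ k)]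
    have hveq : v = fun z : EuclideanSpace ℝ (Fin n) =>
        -(1 / 2) * (z k) ^ a * (1 - Ssum k z) ^ b := by
      funext z
      rw [hv, hxk, hSs]
    rw [hxk] at hx1
    rw [hSs] at hx2
    -- point data
    set t : ℝ := x k with htdef
    set s0 : ℝ := Ssum k x with hs0def
    set u : ℝ := 1 - s0 with hudef
    have ht : 0 < t := hx1
    have hu : 0 < u := by simp only [hudef]; linarith
    have hs0 : 0 ≤ s0 := Ssum_nonneg k x
    have hU : {z : EuclideanSpace ℝ (Fin n) | 0 < z k ∧ Ssum k z < 1} ∈ nhds x := by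
      apply IsOpen.mem_nhds
      · exact (isOpen_lt continuous_const
          (EuclideanSpace.proj k : EuclideanSpace ℝ (Fin n) →L[ℝ] ℝ).continuous).inter
          (isOpen_lt (continuous_Ssum k) continuous_const)
      · exact ⟨hx1, hx2⟩
    set ψ : Fin n → EuclideanSpace ℝ (Fin n) → ℝ := fun i z =>
      if i = k then -(1 / 2) * a * (z k) ^ (a - 1) * (1 - Ssum k z) ^ b
      else b * (z k) ^ a * (1 - Ssum k z) ^ (b - 1) * z i with hψ
    have hfd : ∀ z : EuclideanSpace ℝ (Fin n), 0 < z k → Ssum k z < 1 →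
        ∀ i, fderiv ℝ v z (EuclideanSpace.single i 1) = ψ i z := by
      intro z hz1 hz2 i
      have hm := master k (-(1 / 2)) a b z hz1 hz2
      rw [← hveq] at hm
      rw [hm.fderiv]
      simp only [ContinuousLinearMap.add_apply, ContinuousLinearMap.smul_apply, proj_single,
        Lmap_single, smul_eq_mul, hψ]
      rcases eq_or_ne i k with hik | hik
      · rw [hik]
        simp only [if_true, if_pos trivial]
        ring
      · rw [if_neg (Ne.symm hik), if_neg hik, if_neg hik]
        ring
    have heq : ∀ i, (fun z => fderiv ℝ v z (EuclideanSpace.single i 1)) =ᶠ[nhds x] ψ i := by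
      intro i
      filter_upwards [hU] with z hz
      exact hfd z hz.1 hz.2 i
    set α : ℝ := b * t ^ a * u ^ (b - 1) with hαd
    set β : ℝ := 2 * b * (1 - b) * t ^ a * u ^ (b - 2) with hβd
    set γ : ℝ := a * b * t ^ (a - 1) * u ^ (b - 1) with hγd
    set δ : ℝ := a * (1 - a) / 2 * t ^ (a - 2) * u ^ b with hδd
    set χ : Fin n → ℝ := fun i => if i = k then 0 else x i with hχd
    set ε : Fin n → ℝ := fun i => if i = k then 1 else 0 with hεd
    have ea : a - 1 - 1 = a - 2 := by ring
    have eb : b - 1 - 1 = b - 2 := by ring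
    have hx2' : Ssum k x < 1 := hx2
    have hH : ∀ i j, fderiv ℝ (ψ i) x (EuclideanSpace.single j 1)
        = α * (if i = j then 1 else 0)
          + (χ i * (β * χ j + γ * ε j) + ε i * (γ * χ j + (δ - α) * ε j)) := by
      intro i j
      rcases eq_or_ne i k with hik | hik
      · have hψk : ψ i = fun z : EuclideanSpace ℝ (Fin n) =>
            (-(1 / 2) * a) * (z k) ^ (a - 1) * (1 - Ssum k z) ^ b := by
          funext z
          simp only [hψ, if_pos hik]
        rw [hψk, (master k (-(1 / 2) * a) (a - 1) b x hx1 hx2').fderiv]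
        simp only [ContinuousLinearMap.add_apply, ContinuousLinearMap.smul_apply, proj_single,
          Lmap_single, smul_eq_mul, hχd, hεd, ea, ← htdef, ← hs0def, ← hudef]
        rcases eq_or_ne j k with hjk | hjk
        · simp only [if_pos hjk, if_pos hjk.symm, if_pos hik, if_pos (hik.trans hjk.symm)]
          rw [hαd, hγd, hδd]
          ring
        · simp only [if_neg hjk, if_neg (Ne.symm hjk), if_pos hik,
            if_neg (show ¬ i = j from fun h => hjk (h.symm ▸ hik))]
          rw [hαd, hγd, hδd]
          ring
      · have hψi : ψ i = fun z : EuclideanSpace ℝ (Fin n) =>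
            b * (z k) ^ a * (1 - Ssum k z) ^ (b - 1) * z i := by
          funext z
          simp only [hψ, if_neg hik]
        rw [hψi, (show HasFDerivAt (fun z : EuclideanSpace ℝ (Fin n) =>
            b * (z k) ^ a * (1 - Ssum k z) ^ (b - 1) * z i) _ x from
            (master k b a (b - 1) x hx1 hx2').mul (proj_hasFDerivAt i x)).fderiv]
        simp only [ContinuousLinearMap.add_apply, ContinuousLinearMap.smul_apply,
          ContinuousLinearMap.coe_smul', Pi.smul_apply, proj_single, Lmap_single, smul_eq_mul,
          hχd, hεd, eb, ← htdef, ← hs0def, ← hudef]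
        rcases eq_or_ne j k with hjk | hjk
        · simp only [if_pos hjk, if_pos hjk.symm, if_neg hik,
            if_neg (show ¬ i = j from fun h => hik (h.trans hjk))]
          rw [hαd, hγd]
          ring
        · simp only [if_neg hjk, if_neg (Ne.symm hjk), if_neg hik]
          rw [hαd, hβd, hγd]
          ring
    have hn2R : (2 : ℝ) ≤ (n : ℝ) := by exact_mod_cast hn
    have hQ : (0 : ℝ) < (n : ℝ) + p := by linarith
    have ha0 : 0 < a := by rw [ha]; positivity
    have hb0 : 0 < b := by rw [hb]; positivity
    have hkey : ∀ f : Fin n → ℝ, (∑ j, (if j = k then 0 else f j))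
        = ∑ j ∈ Finset.univ.erase k, f j := by
      intro f
      rw [← Finset.sum_erase (f := fun j => if j = k then 0 else f j) Finset.univ (a := k) (by simp)]
      exact Finset.sum_congr rfl fun j hj => if_neg (Finset.mem_erase.mp hj).1
    have hχχ : ∑ j, χ j * χ j = s0 := by
      have h1 : ∀ j, χ j * χ j = (if j = k then 0 else (x j) ^ 2) := by
        intro j
        simp only [hχd]
        split_ifs <;> ring
      rw [Finset.sum_congr rfl (fun j _ => h1 j), hkey, hs0def, Ssum]
    have hεχ : ∑ j, ε j * χ j = 0 := by
      apply Finset.sum_eq_zero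
      intro j _
      simp only [hχd, hεd]
      split_ifs <;> ring
    have hχε : ∑ j, χ j * ε j = 0 := by
      apply Finset.sum_eq_zero
      intro j _
      simp only [hχd, hεd]
      split_ifs <;> ring
    have hεε : ∑ j, ε j * ε j = 1 := by
      have h1 : ∀ j, ε j * ε j = (if j = k then (1:ℝ) else 0) := by
        intro j
        simp only [hεd]
        split_ifs <;> ring
      rw [Finset.sum_congr rfl (fun j _ => h1 j), Finset.sum_ite_eq' Finset.univ k (fun _ => (1:ℝ))]
      simp
    set Umat : Matrix (Fin n) (Fin 2) ℝ :=
      Matrix.of (fun i m => if m = 0 then χ i else ε i) with hUm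
    set Vmat : Matrix (Fin 2) (Fin n) ℝ :=
      Matrix.of (fun m j => if m = 0 then β * χ j + γ * ε j else γ * χ j + (δ - α) * ε j) with hVm
    have hM : (Matrix.of fun i j : Fin n =>
        fderiv ℝ (fun y => fderiv ℝ v y (EuclideanSpace.single i 1)) x (EuclideanSpace.single j 1))
        = α • (1 : Matrix (Fin n) (Fin n) ℝ) + Umat * Vmat := by
      ext i j
      rw [Matrix.of_apply, (heq i).fderiv_eq, hH i j]
      simp only [Matrix.add_apply, Matrix.smul_apply, Matrix.one_apply, Matrix.mul_apply,
        Fin.sum_univ_two, hUm, hVm, Matrix.of_apply, smul_eq_mul,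
        if_pos (rfl : (0 : Fin 2) = 0), if_neg (by decide : ¬ (1 : Fin 2) = 0)]
      split_ifs <;> ring
    have hα0 : 0 < α := by
      rw [hαd]
      positivity
    have e00 : (Vmat * Umat) 0 0 = β * s0 := by
      rw [Matrix.mul_apply]
      simp only [hUm, hVm, Matrix.of_apply, if_pos (rfl : (0 : Fin 2) = 0)]
      calc ∑ j, (β * χ j + γ * ε j) * χ j
          = β * (∑ j, χ j * χ j) + γ * (∑ j, ε j * χ j) := by
            rw [Finset.mul_sum, Finset.mul_sum, ← Finset.sum_add_distrib]
            exact Finset.sum_congr rfl fun j _ => by ring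
        _ = β * s0 := by rw [hχχ, hεχ]; ring
    have e01 : (Vmat * Umat) 0 1 = γ := by
      rw [Matrix.mul_apply]
      simp only [hUm, hVm, Matrix.of_apply, if_pos (rfl : (0 : Fin 2) = 0),
        if_neg (by decide : ¬ (1 : Fin 2) = 0)]
      calc ∑ j, (β * χ j + γ * ε j) * ε j
          = β * (∑ j, χ j * ε j) + γ * (∑ j, ε j * ε j) := by
            rw [Finset.mul_sum, Finset.mul_sum, ← Finset.sum_add_distrib]
            exact Finset.sum_congr rfl fun j _ => by ring
        _ = γ := by rw [hχε, hεε]; ring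
    have e10 : (Vmat * Umat) 1 0 = γ * s0 := by
      rw [Matrix.mul_apply]
      simp only [hUm, hVm, Matrix.of_apply, if_pos (rfl : (0 : Fin 2) = 0),
        if_neg (by decide : ¬ (1 : Fin 2) = 0)]
      calc ∑ j, (γ * χ j + (δ - α) * ε j) * χ j
          = γ * (∑ j, χ j * χ j) + (δ - α) * (∑ j, ε j * χ j) := by
            rw [Finset.mul_sum, Finset.mul_sum, ← Finset.sum_add_distrib]
            exact Finset.sum_congr rfl fun j _ => by ring
        _ = γ * s0 := by rw [hχχ, hεχ]; ring
    have e11 : (Vmat * Umat) 1 1 = δ - α := by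
      rw [Matrix.mul_apply]
      simp only [hUm, hVm, Matrix.of_apply, if_neg (by decide : ¬ (1 : Fin 2) = 0)]
      calc ∑ j, (γ * χ j + (δ - α) * ε j) * ε j
          = γ * (∑ j, χ j * ε j) + (δ - α) * (∑ j, ε j * ε j) := by
            rw [Finset.mul_sum, Finset.mul_sum, ← Finset.sum_add_distrib]
            exact Finset.sum_congr rfl fun j _ => by ring
        _ = δ - α := by rw [hχε, hεε]; ring
    have hdet : (α • (1 : Matrix (Fin n) (Fin n) ℝ) + Umat * Vmat).det
        = α ^ (n - 2) * ((α + β * s0) * δ - γ ^ 2 * s0) := by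
      have h1 : α • (1 : Matrix (Fin n) (Fin n) ℝ) + Umat * Vmat
          = α • (1 + Umat * (α⁻¹ • Vmat)) := by
        rw [smul_add, Matrix.mul_smul, smul_smul, mul_inv_cancel₀ hα0.ne', one_smul]
      rw [h1, Matrix.det_smul, Matrix.det_one_add_mul_comm, Matrix.smul_mul, Matrix.det_fin_two]
      simp only [Matrix.add_apply, Matrix.smul_apply, Matrix.one_apply, smul_eq_mul,
        e00, e01, e10, e11, if_pos rfl, if_true, if_neg (by decide : ¬ (0 : Fin 2) = 1),
        if_neg (by decide : ¬ (1 : Fin 2) = 0), Fintype.card_fin]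
      have hαn : α ^ n = α ^ (n - 2) * α ^ 2 := by
        rw [← pow_add]
        congr 1
        omega
      rw [hαn, mul_assoc]
      congr 1
      field_simp
      ring
    -- rpow combination lemmas
    have htt : t ^ a * t ^ (a - 2) = t ^ (2 * a - 2) := by
      rw [← Real.rpow_add ht]
      congr 1
      ring
    have htt2 : t ^ (a - 1) * t ^ (a - 1) = t ^ (2 * a - 2) := by
      rw [← Real.rpow_add ht]
      congr 1
      ring
    have huu : u ^ (b - 1) * u ^ b = u ^ (2 * b - 2) * u ^ (1 : ℝ) := by
      rw [← Real.rpow_add hu, ← Real.rpow_add hu]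
      congr 1
      ring
    have huu2 : u ^ (b - 2) * u ^ b = u ^ (2 * b - 2) := by
      rw [← Real.rpow_add hu]
      congr 1
      ring
    have huu3 : u ^ (b - 1) * u ^ (b - 1) = u ^ (2 * b - 2) := by
      rw [← Real.rpow_add hu]
      congr 1
      ring
    have hkey2 : (α + β * s0) * δ - γ ^ 2 * s0
        = a * b * t ^ (2 * a - 2) * u ^ (2 * b - 2) * ((1 - a + (1 - 2 * b - a) * s0) / 2) := by
      have h1 : (α + β * s0) * δ - γ ^ 2 * s0
          = (b * (a * (1 - a) / 2)) * ((t ^ a * t ^ (a - 2)) * (u ^ (b - 1) * u ^ b))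
            + (2 * b * (1 - b) * (a * (1 - a) / 2) * s0) *
                ((t ^ a * t ^ (a - 2)) * (u ^ (b - 2) * u ^ b))
            - ((a * b) ^ 2 * s0) * ((t ^ (a - 1) * t ^ (a - 1)) * (u ^ (b - 1) * u ^ (b - 1))) := by
        rw [hαd, hβd, hγd, hδd]
        ring
      rw [h1, htt, htt2, huu, huu2, huu3, Real.rpow_one, hudef]
      ring
    have hmcast : ((n - 2 : ℕ) : ℝ) = (n : ℝ) - 2 := by
      rw [Nat.cast_sub hn]
      norm_num
    have hαpow : α ^ (n - 2) = b ^ (n - 2) * t ^ (a * ((n : ℝ) - 2)) * u ^ ((b - 1) * ((n : ℝ) - 2)) := by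
      rw [hαd, mul_pow, mul_pow, ← Real.rpow_natCast (t ^ a) (n - 2),
        ← Real.rpow_natCast (u ^ (b - 1)) (n - 2), ← Real.rpow_mul ht.le, ← Real.rpow_mul hu.le,
        hmcast]
    have hQne : ((n : ℝ) + p) ≠ 0 := ne_of_gt hQ
    have hEt : a * ((n : ℝ) - 2) + (2 * a - 2) = -(a * p) := by
      rw [ha]
      field_simp
      ring
    have hEu : (b - 1) * ((n : ℝ) - 2) + (2 * b - 2) = -(b * p) := by
      rw [hb]
      field_simp
      ring
    have hfinal_eq : α ^ (n - 2) * ((α + β * s0) * δ - γ ^ 2 * s0)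
        = (a * b ^ (n - 1) * ((1 - a + (1 - 2 * b - a) * s0) / 2)) * t ^ (-(a * p)) * u ^ (-(b * p)) := by
      rw [hαpow, hkey2]
      have h2 : b ^ (n - 2) * t ^ (a * ((n : ℝ) - 2)) * u ^ ((b - 1) * ((n : ℝ) - 2)) *
            (a * b * t ^ (2 * a - 2) * u ^ (2 * b - 2) * ((1 - a + (1 - 2 * b - a) * s0) / 2))
          = (a * (b ^ (n - 2) * b) * ((1 - a + (1 - 2 * b - a) * s0) / 2)) *
              (t ^ (a * ((n : ℝ) - 2)) * t ^ (2 * a - 2)) *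
              (u ^ ((b - 1) * ((n : ℝ) - 2)) * u ^ (2 * b - 2)) := by ring
      rw [h2, ← Real.rpow_add ht, ← Real.rpow_add hu, hEt, hEu, ← pow_succ,
        show n - 2 + 1 = n - 1 from by omega]
    -- the inequality on the constant
    have hr2 : (Real.sqrt s0) ^ 2 = s0 := Real.sq_sqrt hs0
    have hrlt : Real.sqrt s0 < 1 := by
      have h := Real.sqrt_lt_sqrt hs0 hx2
      simpa using h
    have hp1 := part1 n hn p hp a b ha hb (Real.sqrt s0) (Real.sqrt_nonneg s0) hrlt
    rw [hr2] at hp1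
    have h2p : (0 : ℝ) < (2 : ℝ) ^ p := Real.rpow_pos_of_pos two_pos p
    have hpow2 : ((1 : ℝ) / 2) ^ (n : ℕ) * (2 : ℝ) ^ (n - 1) = 1 / 2 := by
      rw [show ((1 : ℝ) / 2) ^ (n : ℕ) = ((1 : ℝ) / 2) ^ (n - 1) * (1 / 2) from by
          rw [← pow_succ]; congr 1; omega,
        show ((1 : ℝ) / 2) ^ (n - 1) * (1 / 2) * (2 : ℝ) ^ (n - 1)
          = (((1 : ℝ) / 2) * 2) ^ (n - 1) * (1 / 2) from by rw [mul_pow]; ring]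
      norm_num
    have hpp : ((1 : ℝ) / 2) ^ p * (2 : ℝ) ^ p = 1 := by
      rw [← Real.mul_rpow (by norm_num) (by norm_num)]
      norm_num
    have hC2 : a * b ^ (n - 1) * ((1 - a + (1 - 2 * b - a) * s0) / 2) ≤ (2 : ℝ) ^ p := by
      have hmul := mul_le_mul_of_nonneg_right hp1 h2p.le
      calc a * b ^ (n - 1) * ((1 - a + (1 - 2 * b - a) * s0) / 2)
          = ((1 : ℝ) / 2) ^ ((n : ℝ) + p) * (2 * b) ^ (n - 1) * a *
              (1 - a + (1 - 2 * b - a) * s0) * (2 : ℝ) ^ p := by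
            rw [Real.rpow_add (by norm_num), Real.rpow_natCast, mul_pow]
            rw [show ((1 : ℝ) / 2) ^ (n : ℕ) * ((1 : ℝ) / 2) ^ p * ((2 : ℝ) ^ (n - 1) * b ^ (n - 1)) * a *
                  (1 - a + (1 - 2 * b - a) * s0) * (2 : ℝ) ^ p
                = (((1 : ℝ) / 2) ^ (n : ℕ) * (2 : ℝ) ^ (n - 1)) * (((1 : ℝ) / 2) ^ p * (2 : ℝ) ^ p) *
                  (b ^ (n - 1) * a * (1 - a + (1 - 2 * b - a) * s0)) from by ring,
              hpow2, hpp]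
            ring
        _ ≤ 1 * (2 : ℝ) ^ p := hmul
        _ = (2 : ℝ) ^ p := one_mul _
    -- the right-hand side
    have hvx : v x = -(1 / 2) * t ^ a * u ^ b := by
      rw [hveq]
    have hvpos : (0 : ℝ) < 1 / 2 * t ^ a * u ^ b := by positivity
    have habs : |v x| = 1 / 2 * t ^ a * u ^ b := by
      rw [hvx, abs_of_neg (by linarith : -(1 / 2) * t ^ a * u ^ b < 0)]
      ring
    have hrhs : |v x| ^ (-p) = (2 : ℝ) ^ p * t ^ (-(a * p)) * u ^ (-(b * p)) := by
      rw [habs, Real.mul_rpow (by positivity) (by positivity),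
        Real.mul_rpow (by norm_num) (by positivity),
        ← Real.rpow_mul ht.le, ← Real.rpow_mul hu.le,
        show a * -p = -(a * p) from by ring, show b * -p = -(b * p) from by ring,
        one_div, Real.inv_rpow two_pos.le, Real.rpow_neg two_pos.le, inv_inv]
    calc (Matrix.of fun i j : Fin n =>
          fderiv ℝ (fun y => fderiv ℝ v y (EuclideanSpace.single i 1)) x
            (EuclideanSpace.single j 1)).det
        = α ^ (n - 2) * ((α + β * s0) * δ - γ ^ 2 * s0) := by rw [hM, hdet]
      _ = (a * b ^ (n - 1) * ((1 - a + (1 - 2 * b - a) * s0) / 2)) * t ^ (-(a * p)) * u ^ (-(b * p)) :=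
          hfinal_eq
      _ ≤ (2 : ℝ) ^ p * t ^ (-(a * p)) * u ^ (-(b * p)) :=
          mul_le_mul_of_nonneg_right
            (mul_le_mul_of_nonneg_right hC2 (Real.rpow_pos_of_pos ht _).le)
            (Real.rpow_pos_of_pos hu _).le
      _ = |v x| ^ (-p) := hrhs.symm
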